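/- Let j ≥ 1, let 𝓛 be a standard interleaved lattice in dimension j, and let 𝓛′ be an additive subgroup of ℤ^j with (2ℤ)^j ⊆ 𝓛′ ⊆ 𝓛 such that 𝓛 ∖ 𝓛′ = {y + x : y ∈ 𝓛′} for some x ∈ 𝓛 ∖ 𝓛′ (i.e., 𝓛′ has index 2 in 𝓛). Define 𝓛_new = {(y, c) ∈ ℤ^{j+1} : y ∈ 𝓛′ and c is even} ∪ {(y, c) ∈ ℤ^{j+1} : y ∈ 𝓛 ∖ 𝓛′ and c is odd}. Then 𝓛_new is a standard interleaved lattice in dimension j + 1. -/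
import Mathlib


open scoped BigOperators Classical

/-- A standard interleaved lattice in dimension `p`: an additive subgroup of `ℤ^p`
containing `(2ℤ)^p` whose projection onto every coordinate is all of `ℤ`. -/
def IsStdIL (p : ℕ) (L : AddSubgroup (Fin p → ℤ)) : Prop :=
  (∀ x : Fin p → ℤ, (∀ k, (2 : ℤ) ∣ x k) → x ∈ L) ∧
  (∀ (k : Fin p) (z : ℤ), ∃ x ∈ L, x k = z)

/-- `B(𝓛,s,u) = {x + u : x ∈ 𝓛} ∩ ∏_k {0,1,…,s_k−1}`. -/
def latticeBox (p : ℕ) (L : AddSubgroup (Fin p → ℤ)) (s : Fin p → ℕ)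
    (u : Fin p → ℤ) : Set (Fin p → ℤ) :=
  {y | y - u ∈ L ∧ ∀ k, 0 ≤ y k ∧ y k < (s k : ℤ)}

/-- `m(𝓛,s,u)`, the cardinality of `B(𝓛,s,u)`. -/
noncomputable def latticeSize (p : ℕ) (L : AddSubgroup (Fin p → ℤ)) (s : Fin p → ℕ)
    (u : Fin p → ℤ) : ℕ :=
  (latticeBox p L s u).ncard

/-- The `i`-th smallest element (0-indexed) of a finite set of reals. -/
noncomputable def nthLevel (γ : Finset ℝ) (i : ℕ) : ℝ :=
  (γ.sort (· ≤ ·)).getD i 0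

/-- The interleaved lattice-based design
`D(𝓛,s,𝒴,u) = {(𝒴_{1(i_1)},…,𝒴_{p(i_p)}) : (i_1−1,…,i_p−1) ∈ B(𝓛,s,u)} ⊆ ℝ^p`. -/
noncomputable def design (p : ℕ) (L : AddSubgroup (Fin p → ℤ)) (s : Fin p → ℕ)
    (Y : Fin p → Finset ℝ) (u : Fin p → ℤ) : Set (EuclideanSpace ℝ (Fin p)) :=
  {v | ∃ y ∈ latticeBox p L s u, ∀ k, v k = nthLevel (Y k) (y k).toNat}

/-- `d*(γ)`: minimum gap between adjacent elements of `γ`. -/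
noncomputable def dstar (γ : Finset ℝ) : ℝ :=
  ⨅ i : Fin (γ.card - 1), (nthLevel γ (i.1 + 1) - nthLevel γ i.1)

/-- `d⁺(γ)`: minimum gap between elements two positions apart in `γ`. -/
noncomputable def dplus (γ : Finset ℝ) : ℝ :=
  ⨅ i : Fin (γ.card - 2), (nthLevel γ (i.1 + 2) - nthLevel γ i.1)

theorem stmt_19 (j : ℕ) (hj : 1 ≤ j) (L L' : AddSubgroup (Fin j → ℤ))
    (hL : IsStdIL j L)
    (hsub : ∀ x : Fin j → ℤ, (∀ k, (2 : ℤ) ∣ x k) → x ∈ L')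
    (hL'L : (L' : Set (Fin j → ℤ)) ⊆ (L : Set (Fin j → ℤ)))
    (x : Fin j → ℤ) (hxL : x ∈ L) (hxL' : x ∉ L')
    (hcoset : {y : Fin j → ℤ | y ∈ L ∧ y ∉ L'} =
      (fun y => y + x) '' (L' : Set (Fin j → ℤ))) :
    ∃ M : AddSubgroup (Fin (j + 1) → ℤ),
      (M : Set (Fin (j + 1) → ℤ)) =
        {v : Fin (j + 1) → ℤ |
          (Fin.init v ∈ L' ∧ Even (v (Fin.last j))) ∨
          ((Fin.init v ∈ L ∧ Fin.init v ∉ L') ∧ Odd (v (Fin.last j)))} ∧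
      IsStdIL (j + 1) M := by
  -- basic coset facts
  have F1 : ∀ y : Fin j → ℤ, y ∈ L → y ∉ L' → y - x ∈ L' := by
    intro y hy hy'
    have : y ∈ {y : Fin j → ℤ | y ∈ L ∧ y ∉ L'} := ⟨hy, hy'⟩
    rw [hcoset] at this
    obtain ⟨z, hz, hzx⟩ := this
    have : y - x = z := by simp [← hzx]
    rw [this]; exact hz
  have F2 : ∀ z : Fin j → ℤ, z ∈ L' → z + x ∈ L ∧ z + x ∉ L' := by
    intro z hz
    have : z + x ∈ {y : Fin j → ℤ | y ∈ L ∧ y ∉ L'} := by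
      rw [hcoset]; exact ⟨z, hz, rfl⟩
    exact this
  have h2x : (2 : ℤ) • x ∈ L' := by
    apply hsub; intro k; exact ⟨x k, by simp [two_mul]⟩
  -- sum of two non-L' elements of L is in L'
  have Fsum : ∀ a b : Fin j → ℤ, a ∈ L → a ∉ L' → b ∈ L → b ∉ L' → a + b ∈ L' := by
    intro a b ha ha' hb hb'
    have := L'.add_mem (L'.add_mem (F1 a ha ha') (F1 b hb hb')) h2x
    have e : a - x + (b - x) + (2 : ℤ) • x = a + b := by abel
    rwa [e] at this
  have Fmix : ∀ a b : Fin j → ℤ, a ∈ L' → b ∈ L → b ∉ L' → a + b ∈ L ∧ a + b ∉ L' := by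
    intro a b ha hb hb'
    have := F2 (a + (b - x)) (L'.add_mem ha (F1 b hb hb'))
    have e : a + (b - x) + x = a + b := by abel
    rwa [e] at this
  set S : Set (Fin (j + 1) → ℤ) :=
    {v : Fin (j + 1) → ℤ |
      (Fin.init v ∈ L' ∧ Even (v (Fin.last j))) ∨
      ((Fin.init v ∈ L ∧ Fin.init v ∉ L') ∧ Odd (v (Fin.last j)))} with hS
  have hinit_add : ∀ v w : Fin (j + 1) → ℤ, Fin.init (v + w) = Fin.init v + Fin.init w := by
    intro v w; funext i; simp [Fin.init]
  have hinit_neg : ∀ v : Fin (j + 1) → ℤ, Fin.init (-v) = -(Fin.init v) := by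
    intro v; funext i; simp [Fin.init]
  refine ⟨{ carrier := S,
            zero_mem' := ?_,
            add_mem' := ?_,
            neg_mem' := ?_ }, rfl, ?_, ?_⟩
  swap
  · left
    constructor
    · apply hsub; intro k; simp [Fin.init]
    · simp
  · rintro v w (⟨hv, hve⟩ | ⟨⟨hvL, hvL'⟩, hvo⟩) (⟨hw, hwe⟩ | ⟨⟨hwL, hwL'⟩, hwo⟩)
    · left
      exact ⟨by rw [hinit_add]; exact L'.add_mem hv hw,
        by simpa using hve.add hwe⟩
    · right
      refine ⟨by rw [hinit_add]; exact Fmix _ _ hv hwL hwL', ?_⟩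
      simpa using hve.add_odd hwo
    · right
      have := Fmix _ _ hw hvL hvL'
      rw [add_comm] at this
      refine ⟨by rw [hinit_add]; exact this, ?_⟩
      simpa using hvo.add_even hwe
    · left
      exact ⟨by rw [hinit_add]; exact Fsum _ _ hvL hvL' hwL hwL',
        by simpa using hvo.add_odd hwo⟩
  · rintro v (⟨hv, hve⟩ | ⟨⟨hvL, hvL'⟩, hvo⟩)
    · left
      exact ⟨by rw [hinit_neg]; exact L'.neg_mem hv, by simpa using hve.neg⟩
    · right
      refine ⟨⟨by rw [hinit_neg]; exact L.neg_mem hvL, ?_⟩, by simpa using hvo.neg⟩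
      rw [hinit_neg]
      intro h
      exact hvL' (by simpa using L'.neg_mem h)
  · -- contains (2ℤ)^{j+1}
    intro v hv
    left
    constructor
    · apply hsub; intro k; exact hv k.castSucc
    · obtain ⟨c, hc⟩ := hv (Fin.last j); exact ⟨c, by omega⟩
  · -- projections are all of ℤ
    intro k z
    induction k using Fin.lastCases with
    | last =>
      rcases Int.even_or_odd z with hz | hz
      · refine ⟨Fin.snoc 0 z, ?_, by simp⟩
        left
        refine ⟨?_, by simpa using hz⟩
        have h0 : Fin.init (Fin.snoc (0 : Fin j → ℤ) z : Fin (j+1) → ℤ) = (0 : Fin j → ℤ) := by funext i; simp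
        rw [h0]; exact L'.zero_mem
      · refine ⟨Fin.snoc x z, ?_, by simp⟩
        right
        have hx : Fin.init (Fin.snoc x z : Fin (j+1) → ℤ) = x := by funext i; simp
        rw [hx]
        exact ⟨⟨hxL, hxL'⟩, by simpa using hz⟩
    | cast i =>
      obtain ⟨w, hw, hwz⟩ := hL.2 i z
      by_cases hw' : w ∈ L'
      · refine ⟨Fin.snoc w 0, ?_, by simpa using hwz⟩
        left
        have hi : Fin.init (Fin.snoc w (0:ℤ) : Fin (j+1) → ℤ) = w := by funext i; simp
        rw [hi]
        exact ⟨hw', by simp⟩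
      · refine ⟨Fin.snoc w 1, ?_, by simpa using hwz⟩
        right
        have hi : Fin.init (Fin.snoc w (1:ℤ) : Fin (j+1) → ℤ) = w := by funext i; simp
        rw [hi]
        exact ⟨⟨hw, hw'⟩, by simp⟩
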